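/- Suppose the set T = {s ∈ ℤ : there exists (x,y) ∈ G with x ∈ ℤ ∖ S₁, y ∈ ℤ ∖ S₂ and x + y = sd} is nonempty, and let t be its maximum (T is bounded above since x ≤ F(S₁) and y ≤ F(S₂) for all such (x,y)). If E_{s+1} = ∅ for all s ≥ t + 2 (i.e., t + 2 > m(E_S), which holds in particular whenever E_S = ∅), then m(AP_S) = t + 2. -/

import Mathlib

open scoped BigOperators

namespace SumsetsCurve

/-- The `s`-fold sumset of `A = {a 0, …, a (n-1)}`:
all sums of `s` elements of `A` (with `0A = {0}`). -/
def sumset (n : ℕ) (a : ℕ → ℕ) (s : ℕ) : Set ℕ :=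
  {x | ∃ f : Fin s → ℕ, (∀ i, f i < n) ∧ x = ∑ i, a (f i)}

/-- The numerical semigroup (additive submonoid of ℕ) generated by `B`. -/
def numSG (B : Set ℕ) : Set ℕ := (AddSubmonoid.closure B : AddSubmonoid ℕ)

/-- `S₁`, the numerical semigroup generated by `A`. -/
def S1 (n : ℕ) (a : ℕ → ℕ) : Set ℕ := numSG {x | ∃ i < n, a i = x}

/-- `S₂`, the numerical semigroup generated by `d - A`. -/
def S2 (n d : ℕ) (a : ℕ → ℕ) : Set ℕ := numSG {x | ∃ i < n, d - a i = x}

/-- The conductor of `S ⊆ ℕ`: the least `c` with `c + ℕ ⊆ S`. -/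
noncomputable def conductor (S : Set ℕ) : ℕ := sInf {c | ∀ m, c ≤ m → m ∈ S}

/-- The genus of `S ⊆ ℕ`: the number of gaps `|ℕ \ S|`. -/
noncomputable def genus (S : Set ℕ) : ℕ := Set.ncard {x : ℕ | x ∉ S}

/-- `C = S ∩ [0, conductor S - 2]` (the inequality is taken in ℤ). -/
def Cpart (S : Set ℕ) : Set ℕ := {x | x ∈ S ∧ (x : ℤ) ≤ (conductor S : ℤ) - 2}

/-- The decomposition `sA = C₁ ⊔ [c₁, sd - c₂] ⊔ (sd - C₂)` of the Structure Theorem,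
viewed inside ℤ. -/
def structDecomp (n d : ℕ) (a : ℕ → ℕ) (s : ℕ) : Prop :=
  (Nat.cast '' sumset n a s : Set ℤ)
      = (Nat.cast '' Cpart (S1 n a))
        ∪ Set.Icc ((conductor (S1 n a) : ℤ)) ((s * d : ℤ) - (conductor (S2 n d a) : ℤ))
        ∪ ((fun c => (s * d : ℤ) - c) '' (Nat.cast '' Cpart (S2 n d a)))
    ∧ Disjoint (Nat.cast '' Cpart (S1 n a) : Set ℤ)
        (Set.Icc ((conductor (S1 n a) : ℤ)) ((s * d : ℤ) - (conductor (S2 n d a) : ℤ)))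
    ∧ Disjoint (Nat.cast '' Cpart (S1 n a) : Set ℤ)
        ((fun c => (s * d : ℤ) - c) '' (Nat.cast '' Cpart (S2 n d a)))
    ∧ Disjoint
        (Set.Icc ((conductor (S1 n a) : ℤ)) ((s * d : ℤ) - (conductor (S2 n d a) : ℤ)))
        ((fun c => (s * d : ℤ) - c) '' (Nat.cast '' Cpart (S2 n d a)))

/-- `σ(A)`: the least `σ` such that the Structure Theorem decomposition holds
for all `s ≥ σ`. -/
noncomputable def sigmaA (n d : ℕ) (a : ℕ → ℕ) : ℕ :=
  sInf {σ | ∀ s, σ ≤ s → structDecomp n d a s}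

/-- `r(A)`: the least `r` such that `|sA| = sd + 1 - g₁ - g₂` for all `s ≥ r`
(the regularity of the Hilbert function of `k[C_A]`). -/
noncomputable def rA (n d : ℕ) (a : ℕ → ℕ) : ℕ :=
  sInf {r | ∀ s, r ≤ s →
    ((sumset n a s).ncard : ℤ)
      = (s : ℤ) * d + 1 - genus (S1 n a) - genus (S2 n d a)}

/-- The homogeneous semigroup `S ⊆ ℕ²` generated by `{(a, d-a) : a ∈ A}`. -/
def SS (n d : ℕ) (a : ℕ → ℕ) : Set (ℕ × ℕ) :=
  (AddSubmonoid.closure {p : ℕ × ℕ | ∃ i < n, p = (a i, d - a i)} : AddSubmonoid (ℕ × ℕ))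

/-- The Apery set `AP_S = {p ∈ S : p - (0,d) ∉ S, p - (d,0) ∉ S}`. -/
def APS (n d : ℕ) (a : ℕ → ℕ) : Set (ℕ × ℕ) :=
  {p ∈ SS n d a |
    (¬ ∃ q ∈ SS n d a, q + (0, d) = p) ∧ (¬ ∃ q ∈ SS n d a, q + (d, 0) = p)}

/-- The exceptional set
`E_S = {p ∈ S : p - (0,d) ∈ S, p - (d,0) ∈ S, p - (d,d) ∉ S}`. -/
def ES (n d : ℕ) (a : ℕ → ℕ) : Set (ℕ × ℕ) :=
  {p ∈ SS n d a |
    (∃ q ∈ SS n d a, q + (0, d) = p) ∧ (∃ q ∈ SS n d a, q + (d, 0) = p) ∧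
      (¬ ∃ q ∈ SS n d a, q + (d, d) = p)}

/-- The level `L_s = {(x,y) ∈ ℕ² : x + y = sd}`. -/
def Lev (d s : ℕ) : Set (ℕ × ℕ) := {p | p.1 + p.2 = s * d}

/-- `AP_s = AP_S ∩ L_s`. -/
def APs (n d : ℕ) (a : ℕ → ℕ) (s : ℕ) : Set (ℕ × ℕ) := APS n d a ∩ Lev d s

/-- `E_s = E_S ∩ L_s`. -/
def Es (n d : ℕ) (a : ℕ → ℕ) (s : ℕ) : Set (ℕ × ℕ) := ES n d a ∩ Lev d s

/-- `m(AP_S) = max {s : AP_s ≠ ∅}`. -/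
noncomputable def mAP (n d : ℕ) (a : ℕ → ℕ) : ℕ := sSup {s | APs n d a s ≠ ∅}

/-- The Apery set of `S₁` with respect to `d`: `{x ∈ S₁ : x - d ∉ S₁}`. -/
def Ap1 (n d : ℕ) (a : ℕ → ℕ) : Set ℕ := {x ∈ S1 n a | ¬ ∃ y ∈ S1 n a, y + d = x}

/-- The Apery set of `S₂` with respect to `d`: `{x ∈ S₂ : x - d ∉ S₂}`. -/
def Ap2 (n d : ℕ) (a : ℕ → ℕ) : Set ℕ := {x ∈ S2 n d a | ¬ ∃ y ∈ S2 n d a, y + d = x}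

/-- `G`, the subgroup of ℤ² generated by `S`. -/
def G (n d : ℕ) (a : ℕ → ℕ) : AddSubgroup (ℤ × ℤ) :=
  AddSubgroup.closure {p | ∃ i < n, p = ((a i : ℤ), (d : ℤ) - (a i : ℤ))}

/-- `S₁` viewed inside ℤ. -/
def S1Z (n : ℕ) (a : ℕ → ℕ) : Set ℤ := Nat.cast '' S1 n a

/-- `S₂` viewed inside ℤ. -/
def S2Z (n d : ℕ) (a : ℕ → ℕ) : Set ℤ := Nat.cast '' S2 n d a

/-- `S' = G ∩ (S₁ × S₂)`. -/
def Sprime (n d : ℕ) (a : ℕ → ℕ) : Set (ℤ × ℤ) :=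
  {p | p ∈ G n d a ∧ p.1 ∈ S1Z n a ∧ p.2 ∈ S2Z n d a}

/-- The homogeneous semigroup `S` viewed inside ℤ². -/
def SZ (n d : ℕ) (a : ℕ → ℕ) : Set (ℤ × ℤ) :=
  (fun p : ℕ × ℕ => ((p.1 : ℤ), (p.2 : ℤ))) '' SS n d a



section Aux

variable {n d : ℕ} {a c c' : ℕ → ℕ}

lemma zero_mem_sumset : (0 : ℕ) ∈ sumset n c 0 :=
  ⟨fun _ => 0, fun i => i.elim0, by simp⟩

lemma mem_sumset_single {i : ℕ} (hi : i < n) : c i ∈ sumset n c 1 :=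
  ⟨fun _ => i, fun _ => hi, by simp⟩

lemma sumset_add {s m x y : ℕ} (hx : x ∈ sumset n c s) (hy : y ∈ sumset n c m) :
    x + y ∈ sumset n c (s + m) := by
  obtain ⟨f, hf, rfl⟩ := hx
  obtain ⟨g, hg, rfl⟩ := hy
  refine ⟨Fin.addCases f g, fun i => ?_, ?_⟩
  · refine Fin.addCases (motive := fun i => Fin.addCases f g i < n) (fun j => ?_) (fun j => ?_) i
    · simpa using hf j
    · simpa using hg j
  · rw [Fin.sum_univ_add]
    simp

lemma sumset_succ_self (h0 : ∃ i, i < n ∧ c i = 0) {s x : ℕ} (hx : x ∈ sumset n c s) :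
    x ∈ sumset n c (s + 1) := by
  obtain ⟨i, hi, hci⟩ := h0
  have h := sumset_add hx (mem_sumset_single hi)
  rwa [hci, add_zero] at h

lemma sumset_mono (h0 : ∃ i, i < n ∧ c i = 0) {s m x : ℕ} (hsm : s ≤ m)
    (hx : x ∈ sumset n c s) : x ∈ sumset n c m := by
  induction m, hsm using Nat.le_induction with
  | base => exact hx
  | succ m hm ih => exact sumset_succ_self h0 ih

lemma sumset_add_d (hdm : ∃ i, i < n ∧ c i = d) {s x : ℕ} (hx : x ∈ sumset n c s) :
    x + d ∈ sumset n c (s + 1) := by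
  obtain ⟨i, hi, hci⟩ := hdm
  have h := sumset_add hx (mem_sumset_single hi)
  rwa [hci] at h

lemma sumset_le (hle : ∀ i < n, c i ≤ d) {s x : ℕ} (hx : x ∈ sumset n c s) :
    x ≤ s * d := by
  obtain ⟨f, hf, rfl⟩ := hx
  calc ∑ i, c (f i) ≤ ∑ _i : Fin s, d := Finset.sum_le_sum fun i _ => hle _ (hf i)
  _ = s * d := by simp [mul_comm]

lemma sumset_dual (hle : ∀ i < n, c i ≤ d) {s x y : ℕ}
    (hx : x ∈ sumset n c s) (hxy : x + y = s * d) :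
    y ∈ sumset n (fun i => d - c i) s := by
  obtain ⟨f, hf, rfl⟩ := hx
  refine ⟨f, hf, ?_⟩
  show y = ∑ i, (d - c (f i))
  have h1 : ∑ i, (d - c (f i)) + ∑ i, c (f i) = s * d := by
    rw [← Finset.sum_add_distrib]
    calc ∑ i : Fin s, (d - c (f i) + c (f i)) = ∑ _i : Fin s, d :=
          Finset.sum_congr rfl fun i _ => Nat.sub_add_cancel (hle _ (hf i))
    _ = s * d := by simp [mul_comm]
  omega

lemma sumset_congr (h : ∀ i < n, c i = c' i) (s : ℕ) :
    sumset n c s = sumset n c' s := by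
  ext x
  constructor <;> rintro ⟨f, hf, rfl⟩
  · exact ⟨f, hf, Finset.sum_congr rfl fun i _ => h _ (hf i)⟩
  · exact ⟨f, hf, Finset.sum_congr rfl fun i _ => (h _ (hf i)).symm⟩

lemma mem_numSG_iff {x : ℕ} :
    x ∈ numSG {x | ∃ i < n, c i = x} ↔ ∃ s, x ∈ sumset n c s := by
  constructor
  · intro hx
    have hx' : x ∈ AddSubmonoid.closure {x | ∃ i < n, c i = x} := hx
    induction hx' using AddSubmonoid.closure_induction with
    | mem y hy =>
        obtain ⟨i, hi, rfl⟩ := hy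
        exact ⟨1, mem_sumset_single hi⟩
    | zero => exact ⟨0, zero_mem_sumset⟩
    | add y z hy hz ihy ihz =>
        obtain ⟨s1, h1⟩ := ihy hy
        obtain ⟨s2, h2⟩ := ihz hz
        exact ⟨s1 + s2, sumset_add h1 h2⟩
  · rintro ⟨s, f, hf, rfl⟩
    show ∑ i, c (f i) ∈ AddSubmonoid.closure {x | ∃ i < n, c i = x}
    exact AddSubmonoid.sum_mem _ fun i _ => AddSubmonoid.subset_closure ⟨f i, hf i, rfl⟩

lemma mem_S1_iff {x : ℕ} : x ∈ S1 n a ↔ ∃ s, x ∈ sumset n a s := mem_numSG_iff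

lemma mem_S2_iff {x : ℕ} :
    x ∈ S2 n d a ↔ ∃ s, x ∈ sumset n (fun i => d - a i) s := mem_numSG_iff

lemma mem_SS_iff (hle : ∀ i < n, a i ≤ d) {p : ℕ × ℕ} :
    p ∈ SS n d a ↔ ∃ s, p.1 ∈ sumset n a s ∧ p.1 + p.2 = s * d := by
  constructor
  · intro hp
    have hp' : p ∈ AddSubmonoid.closure {p : ℕ × ℕ | ∃ i < n, p = (a i, d - a i)} := hp
    induction hp' using AddSubmonoid.closure_induction with
    | mem q hq =>
        obtain ⟨i, hi, rfl⟩ := hq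
        exact ⟨1, mem_sumset_single hi, by simp [Nat.add_sub_cancel' (hle i hi)]⟩
    | zero => exact ⟨0, zero_mem_sumset, by simp⟩
    | add q r hq hr ihq ihr =>
        obtain ⟨s1, h1, e1⟩ := ihq hq
        obtain ⟨s2, h2, e2⟩ := ihr hr
        refine ⟨s1 + s2, sumset_add h1 h2, ?_⟩
        have : (s1 + s2) * d = s1 * d + s2 * d := by ring
        simp only [Prod.fst_add, Prod.snd_add]
        omega
  · rintro ⟨s, ⟨f, hf, hx⟩, hxy⟩
    have hsum : (∑ i : Fin s, (d - a (f i))) + ∑ i : Fin s, a (f i) = s * d := by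
      rw [← Finset.sum_add_distrib]
      calc ∑ i : Fin s, (d - a (f i) + a (f i)) = ∑ _i : Fin s, d :=
            Finset.sum_congr rfl fun i _ => Nat.sub_add_cancel (hle _ (hf i))
      _ = s * d := by simp [mul_comm]
    have hp : p = ∑ i : Fin s, ((a (f i), d - a (f i)) : ℕ × ℕ) := by
      have h1 : (∑ i : Fin s, ((a (f i), d - a (f i)) : ℕ × ℕ)).1 = ∑ i, a (f i) := by
        simpa only [AddMonoidHom.coe_fst] using map_sum (AddMonoidHom.fst ℕ ℕ)
          (fun i => ((a (f i), d - a (f i)) : ℕ × ℕ)) Finset.univ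
      have h2 : (∑ i : Fin s, ((a (f i), d - a (f i)) : ℕ × ℕ)).2 = ∑ i, (d - a (f i)) := by
        simpa only [AddMonoidHom.coe_snd] using map_sum (AddMonoidHom.snd ℕ ℕ)
          (fun i => ((a (f i), d - a (f i)) : ℕ × ℕ)) Finset.univ
      have : p.2 = ∑ i : Fin s, (d - a (f i)) := by omega
      exact Prod.ext (by omega) (by omega)
    rw [hp]
    show _ ∈ AddSubmonoid.closure {p : ℕ × ℕ | ∃ i < n, p = (a i, d - a i)}
    exact AddSubmonoid.sum_mem _ fun i _ => AddSubmonoid.subset_closure ⟨f i, hf i, rfl⟩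

lemma gcd_cast_mem (H : AddSubgroup ℤ) (a : ℕ → ℕ) (F : Finset ℕ)
    (h : ∀ i ∈ F, (a i : ℤ) ∈ H) : ((F.gcd a : ℕ) : ℤ) ∈ H := by
  induction F using Finset.induction_on with
  | empty => simpa using H.zero_mem
  | insert i F hi ih =>
      rw [Finset.gcd_insert]
      have h1 : (a i : ℤ) ∈ H := h _ (Finset.mem_insert_self _ _)
      have h2 : ((F.gcd a : ℕ) : ℤ) ∈ H := ih fun j hj => h _ (Finset.mem_insert_of_mem hj)
      have hgg : GCDMonoid.gcd (a i) (F.gcd a) = Nat.gcd (a i) (F.gcd a) := rfl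
      have hg : ((GCDMonoid.gcd (a i) (F.gcd a) : ℕ) : ℤ)
          = (a i : ℤ) * Nat.gcdA (a i) (F.gcd a)
            + ((F.gcd a : ℕ) : ℤ) * Nat.gcdB (a i) (F.gcd a) := by
        rw [hgg]
        exact Nat.gcd_eq_gcd_ab (a i) (F.gcd a)
      rw [hg]
      have m1 : (a i : ℤ) * Nat.gcdA (a i) (F.gcd a) ∈ H := by
        have := H.zsmul_mem h1 (Nat.gcdA (a i) (F.gcd a))
        rwa [zsmul_eq_mul, mul_comm] at this
      have m2 : ((F.gcd a : ℕ) : ℤ) * Nat.gcdB (a i) (F.gcd a) ∈ H := by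
        have := H.zsmul_mem h2 (Nat.gcdB (a i) (F.gcd a))
        rwa [zsmul_eq_mul, mul_comm] at this
      exact H.add_mem m1 m2

end Aux

/-- Let `t` be the maximum of `T = {s ∈ ℤ : ∃ (x,y) ∈ G, x ∉ S₁, y ∉ S₂, x + y = sd}`
(assumed nonempty with maximum `t`). If `E_{s+1} = ∅` for all `s ≥ t + 2`
(i.e., `t + 2 > m(E_S)`, which holds in particular when `E_S = ∅`), then
`m(AP_S) = t + 2`. -/
theorem mAP_eq_of_max_gap_level (n d : ℕ) (a : ℕ → ℕ)
    (hn : 4 ≤ n)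
    (ha0 : a 0 = 0)
    (had : a (n - 1) = d)
    (hmono : ∀ i j, i < j → j ≤ n - 1 → a i < a j)
    (hgcd : (Finset.Icc 1 (n - 1)).gcd a = 1)
    (t : ℤ)
    (htmem : t ∈ {s : ℤ | ∃ p : ℤ × ℤ, p ∈ G n d a ∧ p.1 ∉ S1Z n a
        ∧ p.2 ∉ S2Z n d a ∧ p.1 + p.2 = s * d})
    (htmax : ∀ s ∈ {s : ℤ | ∃ p : ℤ × ℤ, p ∈ G n d a ∧ p.1 ∉ S1Z n a
        ∧ p.2 ∉ S2Z n d a ∧ p.1 + p.2 = s * d}, s ≤ t)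
    (hE : ∀ s : ℕ, t + 2 ≤ (s : ℤ) → Es n d a (s + 1) = ∅) :
    (mAP n d a : ℤ) = t + 2 := by
  classical
  have hn0 : 0 < n := by omega
  have hd : 0 < d := by
    have h := hmono 0 (n - 1) (by omega) le_rfl
    rw [ha0, had] at h
    exact h
  have hd' : (0 : ℤ) < (d : ℤ) := by exact_mod_cast hd
  have hale : ∀ i < n, a i ≤ d := by
    intro i hi
    by_cases h : i = n - 1
    · rw [h, had]
    · have := hmono i (n - 1) (by omega) le_rfl
      rw [had] at this
      omega
  have ha0' : ∃ i, i < n ∧ a i = 0 := ⟨0, hn0, ha0⟩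
  have hb0' : ∃ i, i < n ∧ (fun i => d - a i) i = 0 := ⟨n - 1, by omega, by simp [had]⟩
  have hbd' : ∃ i, i < n ∧ (fun i => d - a i) i = d := ⟨0, hn0, by simp [ha0]⟩
  have hble : ∀ i < n, (fun i => d - a i) i ≤ d := fun i _ => Nat.sub_le _ _
  have dualA : ∀ {s x y : ℕ}, x ∈ sumset n a s → x + y = s * d →
      y ∈ sumset n (fun i => d - a i) s := fun hx hxy => sumset_dual hale hx hxy
  have dualB : ∀ {s x y : ℕ}, y ∈ sumset n (fun i => d - a i) s → x + y = s * d →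
      x ∈ sumset n a s := by
    intro s x y hy hxy
    have h := sumset_dual hble hy (show y + x = s * d by omega)
    rwa [sumset_congr (fun i hi => Nat.sub_sub_self (hale i hi)) s] at h
  have hS1Z : ∀ u : ℤ, u ∈ S1Z n a ↔ 0 ≤ u ∧ ∃ s, u.toNat ∈ sumset n a s := by
    intro u
    constructor
    · rintro ⟨x, hx, rfl⟩
      refine ⟨Int.natCast_nonneg x, ?_⟩
      simpa using mem_S1_iff.1 hx
    · rintro ⟨hu, s, hs⟩
      exact ⟨u.toNat, mem_S1_iff.2 ⟨s, hs⟩, Int.toNat_of_nonneg hu⟩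
  have hS2Z : ∀ v : ℤ, v ∈ S2Z n d a ↔ 0 ≤ v ∧ ∃ s, v.toNat ∈ sumset n (fun i => d - a i) s := by
    intro v
    constructor
    · rintro ⟨x, hx, rfl⟩
      refine ⟨Int.natCast_nonneg x, ?_⟩
      simpa using mem_S2_iff.1 hx
    · rintro ⟨hv, s, hs⟩
      exact ⟨v.toNat, mem_S2_iff.2 ⟨s, hs⟩, Int.toNat_of_nonneg hv⟩
  -- G contains every integer point on a level
  have hGmem : ∀ u v k : ℤ, u + v = k * d → (u, v) ∈ G n d a := by
    intro u v k huv
    have h0d : (((0 : ℤ), (d : ℤ)) : ℤ × ℤ) ∈ G n d a := by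
      apply AddSubgroup.subset_closure
      exact ⟨0, hn0, by simp [ha0]⟩
    have hgen : ∀ i, i < n → (((a i : ℤ), -(a i : ℤ)) : ℤ × ℤ) ∈ G n d a := by
      intro i hi
      have h1 : (((a i : ℤ), (d : ℤ) - (a i : ℤ)) : ℤ × ℤ) ∈ G n d a :=
        AddSubgroup.subset_closure ⟨i, hi, rfl⟩
      have h2 := AddSubgroup.sub_mem _ h1 h0d
      have he : (((a i : ℤ), (d : ℤ) - (a i : ℤ)) : ℤ × ℤ) - ((0 : ℤ), (d : ℤ))
          = ((a i : ℤ), -(a i : ℤ)) := by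
        refine Prod.ext ?_ ?_ <;> simp
      rwa [he] at h2
    let H : AddSubgroup ℤ :=
      { carrier := {k : ℤ | ((k, -k) : ℤ × ℤ) ∈ G n d a}
        zero_mem' := by
          have := (G n d a).zero_mem
          exact (show ((0:ℤ), -(0:ℤ)) ∈ G n d a by rw [neg_zero]; exact this)
        add_mem' := by
          intro x y hx hy
          have hx' : ((x, -x) : ℤ × ℤ) ∈ G n d a := hx
          have hy' : ((y, -y) : ℤ × ℤ) ∈ G n d a := hy
          have h := (G n d a).add_mem hx' hy'
          have he : ((x, -x) : ℤ × ℤ) + (y, -y) = (x + y, -(x + y)) := by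
            refine Prod.ext ?_ ?_ <;> simp <;> ring
          show ((x + y, -(x + y)) : ℤ × ℤ) ∈ G n d a
          rwa [he] at h
        neg_mem' := by
          intro x hx
          have hx' : ((x, -x) : ℤ × ℤ) ∈ G n d a := hx
          have h := (G n d a).neg_mem hx'
          have he : -((x, -x) : ℤ × ℤ) = (-x, -(-x)) := by
            refine Prod.ext ?_ ?_ <;> simp
          show ((-x, -(-x)) : ℤ × ℤ) ∈ G n d a
          rwa [he] at h }
    have hH : ∀ i ∈ Finset.Icc 1 (n - 1), (a i : ℤ) ∈ H := by
      intro i hi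
      rw [Finset.mem_Icc] at hi
      exact hgen i (by omega)
    have h1H : (1 : ℤ) ∈ H := by
      have h := gcd_cast_mem H a (Finset.Icc 1 (n - 1)) hH
      rw [hgcd] at h
      simpa using h
    have h1G : (((1 : ℤ), (-1 : ℤ)) : ℤ × ℤ) ∈ G n d a := h1H
    have hkk : ((u, -u) : ℤ × ℤ) ∈ G n d a := by
      have h := AddSubgroup.zsmul_mem _ h1G u
      have he : u • (((1 : ℤ), (-1 : ℤ)) : ℤ × ℤ) = (u, -u) := by
        refine Prod.ext ?_ ?_ <;> simp [Prod.smul_mk, smul_eq_mul]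
      rwa [he] at h
    have h2 := (G n d a).add_mem hkk (AddSubgroup.zsmul_mem _ h0d k)
    have he : ((u, -u) : ℤ × ℤ) + k • (((0 : ℤ), (d : ℤ)) : ℤ × ℤ) = (u, v) := by
      refine Prod.ext ?_ ?_ <;> simp [Prod.smul_mk, smul_eq_mul]
      linarith [huv]
    rwa [he] at h2
  -- levels above t have no double gaps
  have hlevel : ∀ k : ℤ, t < k → ∀ u v : ℤ, u + v = k * d →
      u ∈ S1Z n a ∨ v ∈ S2Z n d a := by
    intro k hk u v huv
    by_contra hcon
    push_neg at hcon
    have : k ≤ t := htmax k ⟨(u, v), hGmem u v k huv, hcon.1, hcon.2, huv⟩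
    omega
  have hnegd1 : -(d : ℤ) ∉ S1Z n a := by
    rintro ⟨x, -, hx⟩
    have h0 : (0 : ℤ) ≤ (x : ℤ) := Int.natCast_nonneg x
    omega
  have hnegd2 : -(d : ℤ) ∉ S2Z n d a := by
    rintro ⟨x, -, hx⟩
    have h0 : (0 : ℤ) ≤ (x : ℤ) := Int.natCast_nonneg x
    omega
  have ht2 : -2 ≤ t :=
    htmax (-2) ⟨(-(d : ℤ), -(d : ℤ)), hGmem _ _ (-2) (by ring), hnegd1, hnegd2, by ring⟩
  -- extract level from SS membership
  have hSSlev : ∀ (p : ℕ × ℕ) (s : ℕ), p ∈ SS n d a → p.1 + p.2 = s * d →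
      p.1 ∈ sumset n a s := by
    intro p s hp hl
    obtain ⟨s', h1, h2⟩ := (mem_SS_iff hale).1 hp
    have hs : s' = s := Nat.eq_of_mul_eq_mul_right hd (by omega)
    rwa [hs] at h1
  -- main consequence of the E-hypothesis
  have key1 : ∀ σ : ℕ, t + 2 ≤ (σ : ℤ) → ∀ x : ℕ, x + d ∈ sumset n a σ →
      x ∈ sumset n a σ → ∃ τ, σ = τ + 1 ∧ x ∈ sumset n a τ := by
    intro σ hσ x hxd hx
    obtain ⟨τ, rfl⟩ : ∃ τ, σ = τ + 1 := by
      cases σ with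
      | zero =>
          exfalso
          obtain ⟨f, -, hf⟩ := hxd
          simp at hf
          omega
      | succ τ => exact ⟨τ, rfl⟩
    refine ⟨τ, rfl, ?_⟩
    by_contra hxτ
    have hbxd : x + d ≤ (τ + 1) * d := sumset_le hale hxd
    have e1 : (τ + 2) * d = τ * d + d + d := by ring
    have e2 : (τ + 1) * d = τ * d + d := by ring
    have e3 : (τ + 1 + 1) * d = τ * d + d + d := by ring
    have hp : ((x + d, (τ + 1) * d - x) : ℕ × ℕ) ∈ Es n d a ((τ + 1) + 1) := by
      refine ⟨⟨?_, ⟨(x + d, (τ + 1) * d - (x + d)), ?_, ?_⟩,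
        ⟨(x, (τ + 1) * d - x), ?_, ?_⟩, ?_⟩, ?_⟩
      · exact (mem_SS_iff hale).2 ⟨τ + 2, sumset_succ_self ha0' hxd, by omega⟩
      · exact (mem_SS_iff hale).2 ⟨τ + 1, hxd, by omega⟩
      · refine Prod.ext ?_ ?_ <;> simp <;> omega
      · exact (mem_SS_iff hale).2 ⟨τ + 1, hx, by omega⟩
      · refine Prod.ext ?_ ?_ <;> simp <;> omega
      · rintro ⟨q, hq, hqe⟩
        have h1 := congrArg Prod.fst hqe
        have h2 := congrArg Prod.snd hqe
        simp only [Prod.fst_add, Prod.snd_add] at h1 h2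
        obtain ⟨s', hq1, hq2⟩ := (mem_SS_iff hale).1 hq
        have hs' : s' = τ := Nat.eq_of_mul_eq_mul_right hd (by omega)
        rw [hs'] at hq1
        have hq1' : q.1 = x := by omega
        rw [hq1'] at hq1
        exact hxτ hq1
      · show (x + d) + ((τ + 1) * d - x) = ((τ + 1) + 1) * d
        omega
    have hEmp := hE (τ + 1) (by exact_mod_cast hσ)
    rw [hEmp] at hp
    exact hp
  have key2 : ∀ σ : ℕ, t + 2 ≤ (σ : ℤ) → ∀ w : ℕ,
      w + d ∈ sumset n (fun i => d - a i) σ → w ∈ sumset n (fun i => d - a i) σ →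
      ∃ τ, σ = τ + 1 ∧ w ∈ sumset n (fun i => d - a i) τ := by
    intro σ hσ w hwd hw
    have hbnd : w + d ≤ σ * d := sumset_le hble hwd
    have hx1 : (σ * d - (w + d)) + (w + d) = σ * d := by omega
    have hx2 : ((σ * d - (w + d)) + d) + w = σ * d := by omega
    have hxA : σ * d - (w + d) ∈ sumset n a σ := dualB hwd hx1
    have hxdA : (σ * d - (w + d)) + d ∈ sumset n a σ := dualB hw hx2
    obtain ⟨τ, rfl, hxτ⟩ := key1 σ hσ _ hxdA hxA
    refine ⟨τ, rfl, ?_⟩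
    have e2 : (τ + 1) * d = τ * d + d := by ring
    exact dualA hxτ (by omega)
  set N : ℕ := (t + 2).toNat with hNdef
  have hNt : (N : ℤ) = t + 2 := Int.toNat_of_nonneg (by omega)
  -- N is attained
  have hQN : (APs n d a N).Nonempty := by
    rcases eq_or_lt_of_le ht2 with h2 | h2
    · -- t = -2, N = 0
      have hN0 : N = 0 := by omega
      refine ⟨((0 : ℕ), (0 : ℕ)), ⟨⟨?_, ?_, ?_⟩, ?_⟩⟩
      · exact (mem_SS_iff hale).2 ⟨0, zero_mem_sumset, by simp⟩
      · rintro ⟨q, -, hqe⟩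
        have h2' := congrArg Prod.snd hqe
        simp only [Prod.snd_add] at h2'
        omega
      · rintro ⟨q, -, hqe⟩
        have h1' := congrArg Prod.fst hqe
        simp only [Prod.fst_add] at h1'
        omega
      · show (0 : ℕ) + 0 = N * d
        simp [hN0]
    · -- t ≥ -1, N ≥ 1
      have hN1 : 1 ≤ N := by omega
      obtain ⟨pw, hpG, hu, hv, huv⟩ := htmem
      set u : ℤ := pw.1 with hudef
      set v : ℤ := pw.2 with hvdef
      have hud : u + d ∈ S1Z n a := by
        rcases hlevel (t + 1) (by omega) (u + d) v (by linear_combination huv) with h | h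
        · exact h
        · exact absurd h hv
      have hvd : v + d ∈ S2Z n d a := by
        rcases hlevel (t + 1) (by omega) u (v + d) (by linear_combination huv) with h | h
        · exact absurd h hu
        · exact h
      obtain ⟨hu0, sx, hsx⟩ := (hS1Z _).1 hud
      obtain ⟨hv0, sy, hsy⟩ := (hS2Z _).1 hvd
      set X : ℕ := (u + d).toNat with hXdef
      set Y : ℕ := (v + d).toNat with hYdef
      have hXu : (X : ℤ) = u + d := Int.toNat_of_nonneg hu0
      have hYv : (Y : ℤ) = v + d := Int.toNat_of_nonneg hv0
      have hXY : X + Y = N * d := by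
        have h : ((X + Y : ℕ) : ℤ) = ((N * d : ℕ) : ℤ) := by
          push_cast
          rw [hXu, hYv, hNt]
          linear_combination huv
        exact_mod_cast h
      -- X ∈ sumset n a N
      have hex : ∃ s, X ∈ sumset n a s := ⟨sx, hsx⟩
      have hXN : X ∈ sumset n a N := by
        by_cases hmN : Nat.find hex ≤ N
        · exact sumset_mono ha0' hmN (Nat.find_spec hex)
        · exfalso
          push_neg at hmN
          set m := Nat.find hex with hmdef
          have hmX : X ∈ sumset n a m := Nat.find_spec hex
          have hYw : ∀ j : ℕ, Y + j * d ∈ sumset n (fun i => d - a i) (sy + j) := by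
            intro j
            induction j with
            | zero => simpa using hsy
            | succ j ih =>
                have e : Y + (j + 1) * d = (Y + j * d) + d := by ring
                rw [e]
                exact sumset_add_d hbd' ih
          set W : ℕ := Y + (m - N - 1) * d with hWdef
          have hWmem : ∃ σ, W ∈ sumset n (fun i => d - a i) σ := ⟨sy + (m - N - 1), hYw _⟩
          set k := Nat.find hWmem with hkdef
          have hkW : W ∈ sumset n (fun i => d - a i) k := Nat.find_spec hWmem
          have hXm : X ≤ m * d := sumset_le hale hmX
          have em : m * d = (m - 1) * d + d := by
            have h : m - 1 + 1 = m := by omega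
            calc m * d = (m - 1 + 1) * d := by rw [h]
            _ = (m - 1) * d + d := by ring
          have eXW : X + W = (m - 1) * d := by
            have e2 : (m - N - 1) * d + N * d = (m - 1) * d := by
              have h : (m - N - 1) + N = m - 1 := by omega
              calc (m - N - 1) * d + N * d = ((m - N - 1) + N) * d := by ring
              _ = (m - 1) * d := by rw [h]
            omega
          have hkm : m ≤ k := by
            by_contra h
            push_neg at h
            have hW1 : W ∈ sumset n (fun i => d - a i) (m - 1) :=
              sumset_mono hb0' (by omega) hkW
            have hX1 : X ∈ sumset n a (m - 1) := dualB hW1 eXW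
            exact Nat.find_min hex (show m - 1 < m by omega) hX1
          have hWd : W + d ∈ sumset n (fun i => d - a i) k := by
            have h1 : W + d ∈ sumset n (fun i => d - a i) m := dualA hmX (by omega)
            exact sumset_mono hb0' hkm h1
          have hk1 : N + 1 ≤ k := by omega
          obtain ⟨τ, hkτ, hWτ⟩ := key2 k (by omega) W hWd hkW
          exact Nat.find_min hWmem (show τ < k by omega) hWτ
      have eN : N * d = (N - 1) * d + d := by
        have h : N - 1 + 1 = N := by omega
        calc N * d = (N - 1 + 1) * d := by rw [h]
        _ = (N - 1) * d + d := by ring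
      refine ⟨(X, Y), ⟨⟨?_, ?_, ?_⟩, ?_⟩⟩
      · exact (mem_SS_iff hale).2 ⟨N, hXN, hXY⟩
      · rintro ⟨q, hq, hqe⟩
        have h1 := congrArg Prod.fst hqe
        have h2 := congrArg Prod.snd hqe
        simp only [Prod.fst_add, Prod.snd_add] at h1 h2
        -- q.1 = X, q.2 + d = Y
        obtain ⟨s', hq1, hq2⟩ := (mem_SS_iff hale).1 hq
        have hs' : s' = N - 1 := Nat.eq_of_mul_eq_mul_right hd (by omega)
        rw [hs'] at hq1 hq2
        have hq1' : q.1 = X := by omega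
        rw [hq1'] at hq1 hq2
        have hq2m : q.2 ∈ sumset n (fun i => d - a i) (N - 1) := dualA hq1 (by omega)
        have : v ∈ S2Z n d a := by
          rw [hS2Z]
          refine ⟨by omega, N - 1, ?_⟩
          have hv' : v.toNat = q.2 := by omega
          rwa [hv']
        exact hv this
      · rintro ⟨q, hq, hqe⟩
        have h1 := congrArg Prod.fst hqe
        have h2 := congrArg Prod.snd hqe
        simp only [Prod.fst_add, Prod.snd_add] at h1 h2
        -- q.1 + d = X, q.2 = Y
        obtain ⟨s', hq1, hq2⟩ := (mem_SS_iff hale).1 hq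
        have hs' : s' = N - 1 := Nat.eq_of_mul_eq_mul_right hd (by omega)
        rw [hs'] at hq1
        have : u ∈ S1Z n a := by
          rw [hS1Z]
          refine ⟨by omega, N - 1, ?_⟩
          have hu' : u.toNat = q.1 := by omega
          rwa [hu']
        exact hu this
      · show X + Y = N * d
        exact hXY
  -- no level above N is attained
  have hub : ∀ s : ℕ, (APs n d a s).Nonempty → s ≤ N := by
    rintro s ⟨p, ⟨⟨hpSS, hn1, hn2⟩, hlev⟩⟩
    by_contra hcon
    push_neg at hcon
    have hlev' : p.1 + p.2 = s * d := hlev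
    have hXs : p.1 ∈ sumset n a s := hSSlev p s hpSS hlev'
    have hbX : p.1 ≤ s * d := sumset_le hale hXs
    have es : s * d = (s - 1) * d + d := by
      have h : s - 1 + 1 = s := by omega
      calc s * d = (s - 1 + 1) * d := by rw [h]
      _ = (s - 1) * d + d := by ring
    have hXs1 : p.1 ∉ sumset n a (s - 1) := by
      intro h
      have hb1 : p.1 ≤ (s - 1) * d := sumset_le hale h
      refine hn1 ⟨(p.1, (s - 1) * d - p.1), (mem_SS_iff hale).2 ⟨s - 1, h, by omega⟩, ?_⟩
      have hp2 : (s - 1) * d - p.1 + d = p.2 := by omega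
      calc ((p.1, (s - 1) * d - p.1) : ℕ × ℕ) + (0, d) = (p.1, (s - 1) * d - p.1 + d) := by
            simp only [Prod.mk_add_mk, Nat.add_zero]
      _ = (p.1, p.2) := by rw [hp2]
      _ = p := rfl
    have hXd : ∀ z : ℕ, z + d = p.1 → z ∉ sumset n a (s - 1) := by
      intro z hz hmem
      refine hn2 ⟨(z, p.2), (mem_SS_iff hale).2 ⟨s - 1, hmem, by omega⟩, ?_⟩
      calc ((z, p.2) : ℕ × ℕ) + (d, 0) = (z + d, p.2) := by
            simp only [Prod.mk_add_mk, Nat.add_zero]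
      _ = (p.1, p.2) := by rw [hz]
      _ = p := rfl
    have hlevZ : ((p.1 : ℤ)) + (p.2 : ℤ) = (s : ℤ) * d := by exact_mod_cast hlev'
    have hstep : ((p.1 : ℤ) - d) + ((p.2 : ℤ) - d) = ((s : ℤ) - 2) * d := by
      linear_combination hlevZ
    rcases hlevel ((s : ℤ) - 2) (by omega) _ _ hstep with hcase | hcase
    · -- p.1 - d ∈ S1
      obtain ⟨hz0, sz, hsz⟩ := (hS1Z _).1 hcase
      set z : ℕ := ((p.1 : ℤ) - d).toNat with hzdef
      have hzd : z + d = p.1 := by omega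
      have hez : ∃ σ, z ∈ sumset n a σ := ⟨sz, hsz⟩
      set m := Nat.find hez with hmdef
      have hmz : z ∈ sumset n a m := Nat.find_spec hez
      have hms : s ≤ m := by
        by_contra h
        push_neg at h
        exact hXd z hzd (sumset_mono ha0' (by omega) hmz)
      have hzdm : z + d ∈ sumset n a m := by
        rw [hzd]
        exact sumset_mono ha0' hms hXs
      obtain ⟨τ, hmτ, hzτ⟩ := key1 m (by omega) z hzdm hmz
      exact Nat.find_min hez (show τ < m by omega) hzτ
    · -- p.2 - d ∈ S2
      obtain ⟨hz0, sz, hsz⟩ := (hS2Z _).1 hcase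
      set z : ℕ := ((p.2 : ℤ) - d).toNat with hzdef
      have hzd : z + d = p.2 := by omega
      have hez : ∃ σ, z ∈ sumset n (fun i => d - a i) σ := ⟨sz, hsz⟩
      set m := Nat.find hez with hmdef
      have hmz : z ∈ sumset n (fun i => d - a i) m := Nat.find_spec hez
      have hms : s ≤ m := by
        by_contra h
        push_neg at h
        have hz1 : z ∈ sumset n (fun i => d - a i) (s - 1) :=
          sumset_mono hb0' (by omega) hmz
        exact hXs1 (dualB hz1 (by omega))
      have hzdm : z + d ∈ sumset n (fun i => d - a i) m := by
        rw [hzd]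
        exact sumset_mono hb0' hms (dualA hXs hlev')
      obtain ⟨τ, hmτ, hzτ⟩ := key2 m (by omega) z hzdm hmz
      exact Nat.find_min hez (show τ < m by omega) hzτ
  have hsup : mAP n d a = N := by
    have hgreat : IsGreatest {s | APs n d a s ≠ ∅} N :=
      ⟨Set.nonempty_iff_ne_empty.1 hQN,
       fun s hs => hub s (Set.nonempty_iff_ne_empty.2 hs)⟩
    exact hgreat.csSup_eq
  rw [hsup, hNt]

end SumsetsCurve
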